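/- Let p ∈ [0,1], n ∈ ℕ, let 𝓗 be a set of oriented graphs with vertex set [n], and let D₀ be a fixed digraph with vertex set [n]. Let D₁ be the binomial random digraph D(n,p) in which each ordered pair (u,v), u ≠ v, is an edge independently with probability p, and let D₁* be the random digraph in which, for each unordered pair {u,v}, both edges (u,v) and (v,u) are included together independently with probability p (and otherwise both excluded). Then P(∃ H ∈ 𝓗 : H ⊆ D₀ ∪ D₁) ≥ P(∃ H ∈ 𝓗 : H ⊆ D₀ ∪ D₁*). -/

import Mathlib

open MeasureTheory
open scoped ENNReal

/-- The Bernoulli measure on `Bool` with success probability `p` (clamped to `[0,1]`). -/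
noncomputable def bernoulliMeasure (p : ℝ≥0∞) : Measure Bool :=
  (PMF.bernoulli (min p 1).toNNReal
    ((ENNReal.toNNReal_mono ENNReal.one_ne_top (min_le_right p 1)).trans (by simp))).toMeasure

instance (p : ℝ≥0∞) : IsProbabilityMeasure (bernoulliMeasure p) :=
  PMF.toMeasure.isProbabilityMeasure _

/-- Independent fair-coin-style product measure: each coordinate is `true`
independently with probability `p`. -/
noncomputable def coinMeasure (ι : Type*) [Fintype ι] (p : ℝ≥0∞) : Measure (ι → Bool) :=
  Measure.pi fun _ => bernoulliMeasure p

/-- The edge set of the binomial random digraph `D(n,p)` determined by the outcome `ω`: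
each ordered pair `(u,v)` with `u ≠ v` is an edge iff its coin is `true`. -/
def dEdges {n : ℕ} (ω : Fin n × Fin n → Bool) : Set (Fin n × Fin n) :=
  {e | e.1 ≠ e.2 ∧ ω e = true}

/-- The edge set of the random digraph `D*(n,p)` determined by the outcome `ω`: for each
unordered pair `{u,v}` both edges `(u,v)` and `(v,u)` are included together iff the coin of
the ordered representative is `true`. -/
def dStarEdges {n : ℕ} (ω : Fin n × Fin n → Bool) : Set (Fin n × Fin n) :=
  {e | e.1 ≠ e.2 ∧ ω (if e.1 ≤ e.2 then e else (e.2, e.1)) = true}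

/-- A digraph (given by its edge set) is an oriented graph: no loops and at most one edge
between any pair of vertices. -/
def IsOriented {n : ℕ} (H : Set (Fin n × Fin n)) : Prop :=
  ∀ u v : Fin n, (u, v) ∈ H → u ≠ v ∧ (v, u) ∉ H

/-! ### Auxiliary machinery -/

namespace Stmt4Aux

open Finset Function

/-- Splitting a sum over `α → Bool` at two distinguished coordinates. -/
lemma sum_split_two {α : Type*} [Fintype α] [DecidableEq α] {t t' : α} (h : t ≠ t')
    (f : (α → Bool) → ℝ≥0∞) :
    ∑ ω : α → Bool, f ω =
      ∑ ρ ∈ Finset.univ.filter (fun ρ : α → Bool => ρ t = false ∧ ρ t' = false),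
        ∑ ab : Bool × Bool, f (update (update ρ t ab.2) t' ab.1) := by
  classical
  rw [← Finset.sum_product']
  have key : ∀ ω : α → Bool,
      update (update (update (update ω t false) t' false) t (ω t)) t' (ω t') = ω := by
    intro ω; funext x
    rcases eq_or_ne x t' with rfl | hx'
    · simp
    rcases eq_or_ne x t with rfl | hx
    · simp [Function.update_apply, h, hx']
    · simp [Function.update_apply, hx, hx']
  refine Finset.sum_nbij'
    (fun ω => (update (update ω t false) t' false, (ω t', ω t)))
    (fun x => update (update x.1 t x.2.2) t' x.2.1) ?_ ?_ ?_ ?_ ?_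
  · intro ω _
    simp [Function.update_apply, h.symm]
  · simp
  · intro ω _; exact key ω
  · rintro ⟨ρ, a, b⟩ hx
    simp only [Finset.mem_product, Finset.mem_filter, Finset.mem_univ, true_and] at hx
    obtain ⟨⟨h1, h2⟩, -⟩ := hx
    simp only [Prod.mk.injEq]
    refine ⟨?_, ?_, ?_⟩
    · funext x
      rcases eq_or_ne x t' with rfl | hx'
      · simp [h2]
      rcases eq_or_ne x t with rfl | hx
      · simp [Function.update_apply, h, hx', h1]
      · simp [Function.update_apply, hx, hx']
    · simp [Function.update_apply]
    · simp [Function.update_apply, h]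
  · intro ω _
    exact (congrArg f (key ω)).symm

/-- Splitting a product over all coordinates at two distinguished updated coordinates. -/
lemma prod_split {α : Type*} [Fintype α] [DecidableEq α] (g : Bool → ℝ≥0∞)
    (ρ : α → Bool) {t t' : α} (h : t ≠ t') (a b : Bool) :
    ∏ e, g (update (update ρ t b) t' a e)
      = g a * (g b * ∏ e ∈ (Finset.univ.erase t').erase t, g (ρ e)) := by
  classical
  rw [← Finset.mul_prod_erase Finset.univ _ (Finset.mem_univ t')]
  rw [← Finset.mul_prod_erase (Finset.univ.erase t') _
      (Finset.mem_erase.2 ⟨h, Finset.mem_univ t⟩)]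
  rw [Function.update_self, Function.update_of_ne h, Function.update_self]
  congr 2
  refine Finset.prod_congr rfl fun x hx => ?_
  simp only [Finset.mem_erase] at hx
  rw [Function.update_of_ne hx.2.1, Function.update_of_ne hx.1]

lemma coin_apply {n : ℕ} (r : ℝ≥0∞) (hr : r ≤ 1) (S : Set (Fin n × Fin n → Bool)) :
    coinMeasure (Fin n × Fin n) r S
      = ∑ ω : Fin n × Fin n → Bool,
          S.indicator (fun _ => (1 : ℝ≥0∞)) ω * ∏ e, cond (ω e) r (1 - r) := by
  classical
  have hsingle : ∀ ω : Fin n × Fin n → Bool,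
      coinMeasure (Fin n × Fin n) r {ω} = ∏ e, cond (ω e) r (1 - r) := by
    intro ω
    rw [coinMeasure, ← Set.univ_pi_singleton ω, Measure.pi_pi]
    refine Finset.prod_congr rfl fun e _ => ?_
    rw [bernoulliMeasure, PMF.toMeasure_apply_singleton _ _ (measurableSet_singleton _),
      PMF.bernoulli_apply, min_eq_left hr, Bool.apply_cond ENNReal.ofNNReal, ENNReal.coe_sub, ENNReal.coe_one,
      ENNReal.coe_toNNReal (ne_top_of_le_ne_top ENNReal.one_ne_top hr)]
  have h : S = ⋃ ω ∈ Finset.univ.filter (· ∈ S), ({ω} : Set (Fin n × Fin n → Bool)) := by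
    ext x; simp
  conv_lhs => rw [h]
  rw [measure_biUnion_finset]
  · rw [Finset.sum_filter]
    refine Finset.sum_congr rfl fun ω _ => ?_
    by_cases hω : ω ∈ S
    · rw [if_pos hω, Set.indicator_of_mem hω, one_mul, hsingle]
    · rw [if_neg hω, Set.indicator_of_notMem hω, zero_mul]
  · intro a _ b _ hab; simp [Set.disjoint_singleton, hab]
  · intro b _; exact measurableSet_singleton b


variable {n : ℕ}

/-- Coin selector for the hybrid digraph: edges whose (lower-oriented) pair is not yet
"independent-ized" (not in `T`) read the coin of the swapped (upper) representative. -/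
def sel (T : Finset (Fin n × Fin n)) (e : Fin n × Fin n) : Fin n × Fin n :=
  if e.2 < e.1 ∧ e ∉ T then (e.2, e.1) else e

/-- Hybrid random edge set interpolating between `dStarEdges` (`T = ∅`) and `dEdges`. -/
def hEdges (T : Finset (Fin n × Fin n)) (ω : Fin n × Fin n → Bool) : Set (Fin n × Fin n) :=
  {e | e.1 ≠ e.2 ∧ ω (sel T e) = true}

lemma hEdges_mono (T : Finset (Fin n × Fin n)) {ω ω' : Fin n × Fin n → Bool}
    (h : ∀ e, ω e = true → ω' e = true) : hEdges T ω ⊆ hEdges T ω' :=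
  fun _ he => ⟨he.1, h _ he.2⟩

lemma abstract_ineq (A B c d x11 x10 x01 x00 : ℝ≥0∞) (hcd : c = d)
    (hx : x11 + x00 ≤ x10 + x01) :
    (A + x11 * c) + (x00 * d + B) ≤ (A + x10 * c) + (x01 * d + B) := by
  subst hcd
  have h : x11 * c + x00 * c ≤ x10 * c + x01 * c := by
    rw [← add_mul, ← add_mul]; exact mul_le_mul_left hx c
  calc (A + x11 * c) + (x00 * c + B) = (x11 * c + x00 * c) + (A + B) := by ring
    _ ≤ (x10 * c + x01 * c) + (A + B) := add_le_add_left h _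
    _ = (A + x10 * c) + (x01 * c + B) := by ring

set_option maxHeartbeats 1000000 in
lemma step (r : ℝ≥0∞) (hr : r ≤ 1)
    (𝓗 : Set (Set (Fin n × Fin n))) (h𝓗 : ∀ H ∈ 𝓗, IsOriented H)
    (D₀ : Set (Fin n × Fin n)) (T : Finset (Fin n × Fin n))
    (t : Fin n × Fin n) (ht : t.2 < t.1) (htT : t ∉ T) :
    coinMeasure (Fin n × Fin n) r {ω | ∃ H ∈ 𝓗, H ⊆ D₀ ∪ hEdges T ω}
      ≤ coinMeasure (Fin n × Fin n) r {ω | ∃ H ∈ 𝓗, H ⊆ D₀ ∪ hEdges (insert t T) ω} := by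
  classical
  set q : ℝ≥0∞ := 1 - r with hq
  have htne : t.2 ≠ t.1 := ne_of_lt ht
  have htt' : t ≠ (t.2, t.1) := by
    intro h
    exact htne ((congrArg Prod.fst h).symm : t.2 = t.1)
  have sel_T_t : sel T t = (t.2, t.1) := by
    rw [sel, if_pos ⟨ht, htT⟩]
  have sel_T'_t : sel (insert t T) t = t := by
    rw [sel, if_neg]
    simp
  have sel_T_ne_t : ∀ e, sel T e ≠ t := by
    intro e h
    rw [sel] at h
    split_ifs at h with hc
    · rw [Prod.ext_iff] at h
      exact absurd (h.1 ▸ h.2 ▸ hc.1) (asymm ht)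
    · push_neg at hc
      exact absurd (h ▸ htT) (fun hn => hn (hc (h ▸ ht)))
  have sel_T'_eq : ∀ e, e ≠ t → sel (insert t T) e = sel T e := by
    intro e he
    rw [sel, sel]
    by_cases hc : e.2 < e.1 ∧ e ∉ T
    · rw [if_pos hc, if_pos ⟨hc.1, by simp [he, hc.2]⟩]
    · rw [if_neg hc, if_neg]
      intro hcon
      exact hc ⟨hcon.1, fun hm => hcon.2 (Finset.mem_insert_of_mem hm)⟩
  have sel_T'_eq_t : ∀ e, sel (insert t T) e = t → e = t := by
    intro e h
    rw [sel] at h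
    split_ifs at h with hc
    · rw [Prod.ext_iff] at h
      exact absurd (h.1 ▸ h.2 ▸ hc.1) (asymm ht)
    · exact h
  have sel_T'_eq_t' : ∀ e, sel (insert t T) e = (t.2, t.1) → e = (t.2, t.1) := by
    intro e h
    rw [sel] at h
    split_ifs at h with hc
    · exfalso
      rw [Prod.ext_iff] at h
      have : e = t := by
        rw [Prod.ext_iff]; exact ⟨h.2, h.1⟩
      exact hc.2 (this ▸ Finset.mem_insert_self t T)
    · exact h
  have hEdges_eq : ∀ ω : Fin n × Fin n → Bool,
      hEdges T ω = hEdges (insert t T) (Function.update ω t (ω (t.2, t.1))) := by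
    intro ω
    ext e
    simp only [hEdges, Set.mem_setOf_eq]
    refine and_congr_right fun _ => ?_
    rcases eq_or_ne e t with rfl | hne
    · rw [sel_T_t, sel_T'_t, Function.update_self]
    · rw [sel_T'_eq e hne, Function.update_of_ne (sel_T_ne_t e)]
  set A' : Set (Fin n × Fin n → Bool) :=
    {ω | ∃ H ∈ 𝓗, H ⊆ D₀ ∪ hEdges (insert t T) ω} with hA'
  have hmemiff : ∀ ω : Fin n × Fin n → Bool,
      (∃ H ∈ 𝓗, H ⊆ D₀ ∪ hEdges T ω) ↔ Function.update ω t (ω (t.2, t.1)) ∈ A' := by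
    intro ω
    rw [hA']
    simp only [Set.mem_setOf_eq, hEdges_eq ω]
  have hind : ∀ ω : Fin n × Fin n → Bool,
      Set.indicator {ω | ∃ H ∈ 𝓗, H ⊆ D₀ ∪ hEdges T ω} (fun _ => (1 : ℝ≥0∞)) ω
        = Set.indicator A' (fun _ => (1 : ℝ≥0∞)) (Function.update ω t (ω (t.2, t.1))) := by
    intro ω
    simp only [Set.indicator_apply, Set.mem_setOf_eq]
    rw [if_congr (hmemiff ω) rfl rfl]
  -- the per-pair splitting argument
  calc coinMeasure (Fin n × Fin n) r {ω | ∃ H ∈ 𝓗, H ⊆ D₀ ∪ hEdges T ω}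
      = ∑ ω : Fin n × Fin n → Bool,
          Set.indicator A' (fun _ => (1 : ℝ≥0∞)) (Function.update ω t (ω (t.2, t.1)))
            * ∏ e, cond (ω e) r q := by
        rw [coin_apply r hr]
        exact Finset.sum_congr rfl fun ω _ => by rw [hind ω]
    _ = ∑ ρ ∈ Finset.univ.filter
          (fun ρ : Fin n × Fin n → Bool => ρ t = false ∧ ρ (t.2, t.1) = false),
          ∑ ab : Bool × Bool,
            (fun ω : Fin n × Fin n → Bool =>
              Set.indicator A' (fun _ => (1 : ℝ≥0∞)) (Function.update ω t (ω (t.2, t.1)))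
                * ∏ e, cond (ω e) r q)
            (Function.update (Function.update ρ t ab.2) (t.2, t.1) ab.1) :=
        sum_split_two htt' (fun ω : Fin n × Fin n → Bool =>
          Set.indicator A' (fun _ => (1 : ℝ≥0∞)) (Function.update ω t (ω (t.2, t.1)))
            * ∏ e, cond (ω e) r q)
    _ ≤ ∑ ρ ∈ Finset.univ.filter
          (fun ρ : Fin n × Fin n → Bool => ρ t = false ∧ ρ (t.2, t.1) = false),
          ∑ ab : Bool × Bool,
            (fun ω : Fin n × Fin n → Bool =>
              Set.indicator A' (fun _ => (1 : ℝ≥0∞)) ω * ∏ e, cond (ω e) r q)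
            (Function.update (Function.update ρ t ab.2) (t.2, t.1) ab.1) := by
        refine Finset.sum_le_sum fun ρ _ => ?_
        have hσupd : ∀ x y : Bool,
            Function.update (Function.update (Function.update ρ t y) (t.2, t.1) x) t
                ((Function.update (Function.update ρ t y) (t.2, t.1) x) (t.2, t.1))
              = Function.update (Function.update ρ t x) (t.2, t.1) x := by
          intro x y
          rw [Function.update_self, Function.update_comm htt', Function.update_idem]
          exact Function.update_comm (Ne.symm htt') x x ρ
        -- membership abbreviations
        have hP00 : Function.update (Function.update ρ t false) (t.2, t.1) false ∈ A' →
            ∀ x y : Bool, Function.update (Function.update ρ t y) (t.2, t.1) x ∈ A' := by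
          rintro ⟨H, hH, hsub⟩ x y
          refine ⟨H, hH, hsub.trans (Set.union_subset_union_right _ (hEdges_mono _ ?_))⟩
          intro e he
          rcases eq_or_ne e (t.2, t.1) with rfl | h1
          · rw [Function.update_self] at he; exact absurd he (by simp)
          rcases eq_or_ne e t with rfl | h2
          · rw [Function.update_of_ne h1, Function.update_self] at he
            exact absurd he (by simp)
          · rw [Function.update_of_ne h1, Function.update_of_ne h2] at he ⊢
            exact he
        have hsplit : Function.update (Function.update ρ t true) (t.2, t.1) true ∈ A' →
            Function.update (Function.update ρ t false) (t.2, t.1) true ∈ A'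
              ∨ Function.update (Function.update ρ t true) (t.2, t.1) false ∈ A' := by
          rintro ⟨H, hH, hsub⟩
          by_cases hmem : (t.2, t.1) ∈ H
          · left
            have htnotH : t ∉ H := by
              have h2 := (h𝓗 H hH t.2 t.1 hmem).2
              rwa [Prod.mk.eta] at h2
            refine ⟨H, hH, fun x hx => ?_⟩
            rcases hsub hx with hD | ⟨hx1, hx2⟩
            · exact Or.inl hD
            refine Or.inr ⟨hx1, ?_⟩
            rcases eq_or_ne (sel (insert t T) x) t with hst | hst
            · rw [sel_T'_eq_t x hst] at hx
              exact absurd hx htnotH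
            rcases eq_or_ne (sel (insert t T) x) (t.2, t.1) with hst' | hst'
            · rw [hst', Function.update_self]
            · rw [Function.update_of_ne hst', Function.update_of_ne hst] at hx2 ⊢
              exact hx2
          · right
            refine ⟨H, hH, fun x hx => ?_⟩
            rcases hsub hx with hD | ⟨hx1, hx2⟩
            · exact Or.inl hD
            refine Or.inr ⟨hx1, ?_⟩
            rcases eq_or_ne (sel (insert t T) x) (t.2, t.1) with hst' | hst'
            · rw [sel_T'_eq_t' x hst'] at hx
              exact absurd hx hmem
            rcases eq_or_ne (sel (insert t T) x) t with hst | hst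
            · rw [hst, Function.update_of_ne htt', Function.update_self]
            · rw [Function.update_of_ne hst', Function.update_of_ne hst] at hx2 ⊢
              exact hx2
        have hxnum :
            Set.indicator A' (fun _ => (1 : ℝ≥0∞))
                (Function.update (Function.update ρ t true) (t.2, t.1) true)
              + Set.indicator A' (fun _ => (1 : ℝ≥0∞))
                (Function.update (Function.update ρ t false) (t.2, t.1) false)
            ≤ Set.indicator A' (fun _ => (1 : ℝ≥0∞))
                (Function.update (Function.update ρ t false) (t.2, t.1) true)
              + Set.indicator A' (fun _ => (1 : ℝ≥0∞))
                (Function.update (Function.update ρ t true) (t.2, t.1) false) := by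
          by_cases h00 : Function.update (Function.update ρ t false) (t.2, t.1) false ∈ A'
          · have h10 := hP00 h00 true false
            have h01 := hP00 h00 false true
            rw [Set.indicator_of_mem h00, Set.indicator_of_mem h10, Set.indicator_of_mem h01]
            by_cases h11 : Function.update (Function.update ρ t true) (t.2, t.1) true ∈ A'
            · rw [Set.indicator_of_mem h11]
            · rw [Set.indicator_of_notMem h11]; simp
          by_cases h11 : Function.update (Function.update ρ t true) (t.2, t.1) true ∈ A'
          · rw [Set.indicator_of_mem h11, Set.indicator_of_notMem h00, add_zero]
            rcases hsplit h11 with h | h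
            · rw [Set.indicator_of_mem h]
              exact le_self_add
            · rw [Set.indicator_of_mem h]
              exact le_add_self
          · rw [Set.indicator_of_notMem h00, Set.indicator_of_notMem h11, add_zero]
            exact bot_le
        simp only [Fintype.sum_prod_type, Fintype.sum_bool, hσupd,
          prod_split (fun v => cond v r q) ρ htt', Bool.cond_true, Bool.cond_false]
        exact abstract_ineq _ _ _ _ _ _ _ _ (by ring) hxnum
    _ = ∑ ω : Fin n × Fin n → Bool,
          Set.indicator A' (fun _ => (1 : ℝ≥0∞)) ω * ∏ e, cond (ω e) r q :=
        (sum_split_two htt' (fun ω : Fin n × Fin n → Bool =>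
          Set.indicator A' (fun _ => (1 : ℝ≥0∞)) ω * ∏ e, cond (ω e) r q)).symm
    _ = coinMeasure (Fin n × Fin n) r A' := (coin_apply r hr A').symm

end Stmt4Aux

/-- McDiarmid coupling. For any set `𝓗` of oriented graphs on `[n]` and
any fixed digraph `D₀` on `[n]`,
`P(∃ H ∈ 𝓗 : H ⊆ D₀ ∪ D(n,p)) ≥ P(∃ H ∈ 𝓗 : H ⊆ D₀ ∪ D*(n,p))`. -/
theorem stmt4 (n : ℕ) (p : ℝ) (hp0 : 0 ≤ p) (hp1 : p ≤ 1)
    (𝓗 : Set (Set (Fin n × Fin n))) (h𝓗 : ∀ H ∈ 𝓗, IsOriented H)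
    (D₀ : Set (Fin n × Fin n)) :
    coinMeasure (Fin n × Fin n) (ENNReal.ofReal p)
        {ω | ∃ H ∈ 𝓗, H ⊆ D₀ ∪ dStarEdges ω}
      ≤ coinMeasure (Fin n × Fin n) (ENNReal.ofReal p)
        {ω | ∃ H ∈ 𝓗, H ⊆ D₀ ∪ dEdges ω} := by
  classical
  have hr : ENNReal.ofReal p ≤ 1 := ENNReal.ofReal_le_one.2 hp1
  have hstar : ∀ ω : Fin n × Fin n → Bool, dStarEdges ω = Stmt4Aux.hEdges ∅ ω := by
    intro ω; ext e
    simp only [dStarEdges, Stmt4Aux.hEdges, Set.mem_setOf_eq, Stmt4Aux.sel]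
    refine and_congr_right fun _ => ?_
    have heq : (if e.1 ≤ e.2 then e else (e.2, e.1))
        = (if e.2 < e.1 ∧ e ∉ (∅ : Finset (Fin n × Fin n)) then (e.2, e.1) else e) := by
      by_cases h : e.1 ≤ e.2
      · rw [if_pos h, if_neg]
        intro hc
        exact absurd h (not_le.2 hc.1)
      · rw [if_neg h, if_pos ⟨not_le.1 h, Finset.notMem_empty e⟩]
    rw [heq]
  have hfull : ∀ ω : Fin n × Fin n → Bool,
      dEdges ω = Stmt4Aux.hEdges (Finset.univ.filter fun e : Fin n × Fin n => e.2 < e.1) ω := by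
    intro ω; ext e
    simp only [dEdges, Stmt4Aux.hEdges, Set.mem_setOf_eq, Stmt4Aux.sel]
    refine and_congr_right fun _ => ?_
    rw [if_neg]
    rintro ⟨h1, h2⟩
    exact h2 (Finset.mem_filter.2 ⟨Finset.mem_univ e, h1⟩)
  have main : ∀ T : Finset (Fin n × Fin n),
      T ⊆ (Finset.univ.filter fun e : Fin n × Fin n => e.2 < e.1) →
      coinMeasure (Fin n × Fin n) (ENNReal.ofReal p)
          {ω | ∃ H ∈ 𝓗, H ⊆ D₀ ∪ Stmt4Aux.hEdges ∅ ω}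
        ≤ coinMeasure (Fin n × Fin n) (ENNReal.ofReal p)
          {ω | ∃ H ∈ 𝓗, H ⊆ D₀ ∪ Stmt4Aux.hEdges T ω} := by
    intro T
    induction T using Finset.induction_on with
    | empty => exact fun _ => le_rfl
    | @insert t T htT ih =>
      intro hsub
      have ht : t.2 < t.1 :=
        (Finset.mem_filter.1 (hsub (Finset.mem_insert_self t T))).2
      exact (ih fun x hx => hsub (Finset.mem_insert_of_mem hx)).trans
        (Stmt4Aux.step (ENNReal.ofReal p) hr 𝓗 h𝓗 D₀ T t ht htT)
  simp only [hstar, hfull]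
  exact main _ (Finset.Subset.refl _)
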